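/- Let n ≥ 2. Every sublinear generalized frame function f : ℂⁿ → ℝ is identically zero. -/

import Mathlib

open scoped InnerProductSpace

/-- A function `f : ℂⁿ → ℝ` is sublinear if `f(v)/‖v‖ → 0` as `‖v‖ → ∞`. -/
def SublinearCn {n : ℕ} (f : EuclideanSpace ℂ (Fin n) → ℝ) : Prop :=
  Filter.Tendsto (fun v => f v / ‖v‖)
    (Filter.comap (fun v : EuclideanSpace ℂ (Fin n) => ‖v‖) Filter.atTop) (nhds 0)

/-- Every sublinear generalized frame function on ℂⁿ, n ≥ 2, is identically zero. -/
theorem sublinear_generalized_frame_function_trivial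
    (n : ℕ) (hn : 2 ≤ n) (f : EuclideanSpace ℂ (Fin n) → ℝ)
    (hf0 : f 0 = 0)
    (hframe : ∀ u v : EuclideanSpace ℂ (Fin n), u ≠ 0 → v ≠ 0 → ⟪u, v⟫_ℂ = 0 →
      f (u + v) = f u + f v)
    (hsub : SublinearCn f) :
    ∀ v, f v = 0 := by
  -- existence of an equal-norm orthogonal companion
  have hexists : ∀ v : (EuclideanSpace ℂ (Fin n)), v ≠ 0 → ∃ w : (EuclideanSpace ℂ (Fin n)), w ≠ 0 ∧ ⟪v, w⟫_ℂ = 0 ∧ ‖w‖ = ‖v‖ := by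
    intro v hv
    set K : Submodule ℂ (EuclideanSpace ℂ (Fin n)) := ℂ ∙ v
    have hK : Module.finrank ℂ K + Module.finrank ℂ Kᗮ = n := by
      rw [K.finrank_add_finrank_orthogonal, finrank_euclideanSpace_fin]
    have h1 : Module.finrank ℂ K = 1 := finrank_span_singleton hv
    have hne : Kᗮ ≠ ⊥ := by
      intro h
      rw [h, h1, finrank_bot] at hK
      omega
    obtain ⟨w0, hw0K, hw0⟩ := Submodule.exists_mem_ne_zero_of_ne_bot hne
    have horth : ⟪v, w0⟫_ℂ = 0 :=
      (Submodule.mem_orthogonal K w0).mp hw0K v (Submodule.mem_span_singleton_self v)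
    have hw0n : ‖w0‖ ≠ 0 := norm_ne_zero_iff.mpr hw0
    refine ⟨((‖v‖ / ‖w0‖ : ℝ) : ℂ) • w0, ?_, ?_, ?_⟩
    · apply smul_ne_zero _ hw0
      simp [div_eq_zero_iff, norm_eq_zero, hv, hw0]
    · rw [inner_smul_right, horth, mul_zero]
    · rw [norm_smul]
      simp [abs_of_nonneg, norm_div, div_mul_cancel₀, hw0n, norm_ne_zero_iff.mpr hv]
  -- the doubling identity
  have hdouble : ∀ v w : (EuclideanSpace ℂ (Fin n)), v ≠ 0 → w ≠ 0 → ⟪v, w⟫_ℂ = 0 → ‖w‖ = ‖v‖ →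
      f ((2 : ℂ) • v) = 2 * f v + (f w + f (-w)) := by
    intro v w hv hw hvw hnorm
    have hwv : ⟪w, v⟫_ℂ = 0 := by
      rw [← inner_conj_symm, hvw, map_zero]
    have hvmw : ⟪v, -w⟫_ℂ = 0 := by rw [inner_neg_right, hvw, neg_zero]
    have hadd : v + w ≠ 0 := by
      intro h
      have : ⟪v, v + w⟫_ℂ = 0 := by rw [h, inner_zero_right]
      rw [inner_add_right, hvw, add_zero, inner_self_eq_zero] at this
      exact hv this
    have hsubne : v - w ≠ 0 := by
      intro h
      have : ⟪v, v - w⟫_ℂ = 0 := by rw [h, inner_zero_right]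
      rw [inner_sub_right, hvw, sub_zero, inner_self_eq_zero] at this
      exact hv this
    have horth2 : ⟪v + w, v - w⟫_ℂ = 0 := by
      rw [inner_sub_right, inner_add_left, inner_add_left, hvw, hwv]
      have hv2 : ⟪v, v⟫_ℂ = (‖v‖ : ℂ) ^ 2 := by
        rw [inner_self_eq_norm_sq_to_K]; norm_cast
      have hw2 : ⟪w, w⟫_ℂ = (‖w‖ : ℂ) ^ 2 := by
        rw [inner_self_eq_norm_sq_to_K]; norm_cast
      rw [hv2, hw2, hnorm]
      ring
    have hsum : (v + w) + (v - w) = (2 : ℂ) • v := by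
      rw [two_smul]; abel
    have e1 : f ((v + w) + (v - w)) = f (v + w) + f (v - w) :=
      hframe _ _ hadd hsubne horth2
    have e2 : f (v + w) = f v + f w := hframe _ _ hv hw hvw
    have e3 : f (v - w) = f v + f (-w) := by
      rw [sub_eq_add_neg]
      exact hframe _ _ hv (neg_ne_zero.mpr hw) hvmw
    rw [hsum] at e1
    rw [e1, e2, e3]; ring
  -- norms of powers
  have hnormpow : ∀ (v : (EuclideanSpace ℂ (Fin n))) (k : ℕ), ‖((2 : ℂ) ^ k) • v‖ = 2 ^ k * ‖v‖ := by
    intro v k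
    rw [norm_smul, norm_pow]
    norm_num
  -- along the dyadic sequence, f x / ‖x‖ → 0
  have hseq : ∀ v : (EuclideanSpace ℂ (Fin n)), v ≠ 0 →
      Filter.Tendsto (fun k : ℕ => f (((2 : ℂ) ^ k) • v) / ‖((2 : ℂ) ^ k) • v‖)
        Filter.atTop (nhds 0) := by
    intro v hv
    apply hsub.comp
    rw [Filter.tendsto_comap_iff]
    have : ((fun x : (EuclideanSpace ℂ (Fin n)) => ‖x‖) ∘ fun k : ℕ => ((2 : ℂ) ^ k) • v)
        = fun k : ℕ => 2 ^ k * ‖v‖ := by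
      funext k; exact hnormpow v k
    rw [this]
    exact (tendsto_pow_atTop_atTop_of_one_lt one_lt_two).atTop_mul_const
      (norm_pos_iff.mpr hv)
  -- F(2v) = 0 for every nonzero v, where F x = f x + f (-x)
  have hF2 : ∀ v : (EuclideanSpace ℂ (Fin n)), v ≠ 0 → f ((2 : ℂ) • v) + f (-((2 : ℂ) • v)) = 0 := by
    intro v hv
    obtain ⟨w, hw, hvw, hnorm⟩ := hexists v hv
    set u : ℕ → (EuclideanSpace ℂ (Fin n)) := fun k => ((2 : ℂ) ^ k) • v with hu
    set z : ℕ → (EuclideanSpace ℂ (Fin n)) := fun k => ((2 : ℂ) ^ k) • w with hz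
    set A : ℕ → ℝ := fun k => f (u k) + f (-(u k)) with hA
    set B : ℕ → ℝ := fun k => f (z k) + f (-(z k)) with hB
    have hune : ∀ k, u k ≠ 0 := fun k =>
      smul_ne_zero (pow_ne_zero k two_ne_zero) hv
    have hzne : ∀ k, z k ≠ 0 := fun k =>
      smul_ne_zero (pow_ne_zero k two_ne_zero) hw
    have huz : ∀ k, ⟪u k, z k⟫_ℂ = 0 := by
      intro k
      rw [hu, hz]
      simp only [inner_smul_left, inner_smul_right, hvw, mul_zero]
    have hzu : ∀ k, ⟪z k, u k⟫_ℂ = 0 := by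
      intro k
      rw [← inner_conj_symm, huz k, map_zero]
    have hnorms : ∀ k, ‖z k‖ = ‖u k‖ := by
      intro k; rw [hu, hz, hnormpow, hnormpow, hnorm]
    have hnorms' : ∀ k, ‖u k‖ = ‖z k‖ := fun k => (hnorms k).symm
    have hsucc : ∀ k, (2 : ℂ) • u k = u (k + 1) := by
      intro k; rw [hu]; simp only [smul_smul, ← pow_succ']
    have hsuccz : ∀ k, (2 : ℂ) • z k = z (k + 1) := by
      intro k; rw [hz]; simp only [smul_smul, ← pow_succ']
    -- the recurrences
    have hrecA : ∀ k, A (k + 1) = 2 * A k + 2 * B k := by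
      intro k
      have h1 : f ((2 : ℂ) • u k) = 2 * f (u k) + (f (z k) + f (-(z k))) :=
        hdouble (u k) (z k) (hune k) (hzne k) (huz k) (hnorms k)
      have h2 : f ((2 : ℂ) • (-(u k))) = 2 * f (-(u k)) + (f (z k) + f (-(z k))) := by
        apply hdouble (-(u k)) (z k) (neg_ne_zero.mpr (hune k)) (hzne k)
        · rw [inner_neg_left, huz k, neg_zero]
        · rw [hnorms k, norm_neg]
      rw [hsucc k] at h1
      rw [smul_neg, hsucc k] at h2
      rw [hA]
      dsimp only
      rw [h1, h2]
      ring
    have hrecB : ∀ k, B (k + 1) = 2 * B k + 2 * A k := by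
      intro k
      have h1 : f ((2 : ℂ) • z k) = 2 * f (z k) + (f (u k) + f (-(u k))) :=
        hdouble (z k) (u k) (hzne k) (hune k) (hzu k) (hnorms' k)
      have h2 : f ((2 : ℂ) • (-(z k))) = 2 * f (-(z k)) + (f (u k) + f (-(u k))) := by
        apply hdouble (-(z k)) (u k) (neg_ne_zero.mpr (hzne k)) (hune k)
        · rw [inner_neg_left, hzu k, neg_zero]
        · rw [hnorms' k, norm_neg]
      rw [hsuccz k] at h1
      rw [smul_neg, hsuccz k] at h2
      rw [hB]
      dsimp only
      rw [h1, h2]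
      ring
    -- A (k+1) = 4^k * A 1
    have hgrow : ∀ k, A (k + 1) = 4 ^ k * A 1 ∧ B (k + 1) = 4 ^ k * A 1 := by
      intro k
      induction k with
      | zero =>
        refine ⟨by norm_num, ?_⟩
        have e1 := hrecA 0
        have e2 := hrecB 0
        norm_num at e1 e2 ⊢
        linarith
      | succ m ih =>
        obtain ⟨ih1, ih2⟩ := ih
        constructor
        · rw [hrecA (m + 1), ih1, ih2]; ring
        · rw [hrecB (m + 1), ih1, ih2]; ring
    -- sublinearity applied to both u and -u
    have hT1 : Filter.Tendsto (fun k : ℕ => f (u (k + 1)) / ‖u (k + 1)‖)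
        Filter.atTop (nhds 0) :=
      (hseq v hv).comp (Filter.tendsto_add_atTop_nat 1)
    have hT2 : Filter.Tendsto (fun k : ℕ => f (-(u (k + 1))) / ‖u (k + 1)‖)
        Filter.atTop (nhds 0) := by
      have := (hseq (-v) (neg_ne_zero.mpr hv)).comp (Filter.tendsto_add_atTop_nat 1)
      simpa [Function.comp_def, smul_neg, norm_neg, hu] using this
    have hT : Filter.Tendsto (fun k : ℕ => A (k + 1) / ‖u (k + 1)‖)
        Filter.atTop (nhds 0) := by
      have := hT1.add hT2
      rw [add_zero] at this
      have heq : (fun k : ℕ => f (u (k + 1)) / ‖u (k + 1)‖ + f (-(u (k + 1))) / ‖u (k + 1)‖)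
          = fun k : ℕ => A (k + 1) / ‖u (k + 1)‖ := by
        funext k; rw [hA]; dsimp only; rw [← add_div]
      rw [heq] at this
      exact this
    -- identify the sequence as 2^k * C
    have hvpos : (0 : ℝ) < ‖v‖ := norm_pos_iff.mpr hv
    have hform : ∀ k : ℕ, A (k + 1) / ‖u (k + 1)‖ = 2 ^ k * (A 1 / (2 * ‖v‖)) := by
      intro k
      rw [(hgrow k).1, hu]
      dsimp only
      rw [hnormpow, show (4:ℝ) = 2^2 by norm_num, ← pow_mul]
      field_simp
      ring
    have hA1 : A 1 = 0 := by
      by_contra hA1ne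
      have hCne : A 1 / (2 * ‖v‖) ≠ 0 := by
        apply div_ne_zero hA1ne
        positivity
      have habs : Filter.Tendsto (fun k : ℕ => |2 ^ k * (A 1 / (2 * ‖v‖))|)
          Filter.atTop Filter.atTop := by
        have heq : (fun k : ℕ => |2 ^ k * (A 1 / (2 * ‖v‖))|)
            = fun k : ℕ => (2 : ℝ) ^ k * |A 1 / (2 * ‖v‖)| := by
          funext k
          rw [abs_mul, abs_of_nonneg (by positivity : (0:ℝ) ≤ 2 ^ k)]
        rw [heq]
        exact (tendsto_pow_atTop_atTop_of_one_lt one_lt_two).atTop_mul_const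
          (abs_pos.mpr hCne)
      have htend0 : Filter.Tendsto (fun k : ℕ => |2 ^ k * (A 1 / (2 * ‖v‖))|)
          Filter.atTop (nhds 0) := by
        have : (fun k : ℕ => A (k + 1) / ‖u (k + 1)‖)
            = fun k : ℕ => 2 ^ k * (A 1 / (2 * ‖v‖)) := funext hform
        rw [this] at hT
        simpa using hT.abs
      exact not_tendsto_atTop_of_tendsto_nhds htend0 habs
    have : A 1 = f ((2 : ℂ) • v) + f (-((2 : ℂ) • v)) := by
      rw [hA, hu]; dsimp only; rw [pow_one]
    rw [← this, hA1]
  -- F v = 0 for all nonzero v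
  have hF : ∀ v : (EuclideanSpace ℂ (Fin n)), v ≠ 0 → f v + f (-v) = 0 := by
    intro v hv
    have h := hF2 ((2⁻¹ : ℂ) • v) (smul_ne_zero (by norm_num) hv)
    have : (2 : ℂ) • ((2⁻¹ : ℂ) • v) = v := by
      rw [smul_smul]; norm_num
    rw [this] at h
    exact h
  -- f(2v) = 2 f(v)
  have hdouble2 : ∀ v : (EuclideanSpace ℂ (Fin n)), v ≠ 0 → f ((2 : ℂ) • v) = 2 * f v := by
    intro v hv
    obtain ⟨w, hw, hvw, hnorm⟩ := hexists v hv
    rw [hdouble v w hv hw hvw hnorm, hF w hw, add_zero]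
  -- f(2^k v) = 2^k f(v)
  have hpow : ∀ (v : (EuclideanSpace ℂ (Fin n))), v ≠ 0 → ∀ k : ℕ, f (((2 : ℂ) ^ k) • v) = 2 ^ k * f v := by
    intro v hv k
    induction k with
    | zero => simp
    | succ m ih =>
      have h1 : ((2 : ℂ) ^ (m + 1)) • v = (2 : ℂ) • (((2 : ℂ) ^ m) • v) := by
        rw [smul_smul, ← pow_succ']
      rw [h1, hdouble2 _ (smul_ne_zero (pow_ne_zero m two_ne_zero) hv), ih]
      ring
  -- conclusion
  intro v
  by_cases hv : v = 0
  · rw [hv]; exact hf0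
  · have hvpos : (0 : ℝ) < ‖v‖ := norm_pos_iff.mpr hv
    have hconst : ∀ k : ℕ, f (((2 : ℂ) ^ k) • v) / ‖((2 : ℂ) ^ k) • v‖ = f v / ‖v‖ := by
      intro k
      rw [hpow v hv k, hnormpow]
      rw [mul_div_mul_left _ _ (by positivity : (2:ℝ)^k ≠ 0)]
    have := hseq v hv
    rw [funext hconst] at this
    have hzero : f v / ‖v‖ = 0 := tendsto_nhds_unique tendsto_const_nhds this
    field_simp at hzero
    exact hzero.trans (mul_zero _)
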